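/- arXiv:2212.05151 — 2 statements merged into one kernel-verified Lean document; each statement's English description precedes it below -/
import Mathlib

section
/- (Kiefer–Weiss optimality, Proposition 4.1.) Let 0 ≤ θ_1 < θ_2 < … < θ_k ≤ 1 with k ≥ 2, let ϑ_i ∈ (θ_i, θ_{i+1}) and γ_i ≥ 0 for i = 1,…,k−1 with Σ_{i=1}^{k−1} γ_i = 1, let λ_{ij} ≥ 0 and α_{ij} > 0 for 1 ≤ i ≠ j ≤ k, and set C_{γ,ϑ}(ψ) = Σ_{i=1}^{k−1} γ_i E_{ϑ_i} τ_ψ. Suppose a sequential test ⟨ψ*,φ*⟩ satisfies: (i) its Lagrangian value C_{γ,ϑ}(ψ*) + Σ_{i≠j} λ_{ij} α_{ij}(ψ*,φ*) is finite and is less than or equal to C_{γ,ϑ}(ψ) + Σ_{i≠j} λ_{ij} α_{ij}(ψ,φ) for every sequential test ⟨ψ,φ⟩; (ii) α_{ij}(ψ*,φ*) = α_{ij} for all 1 ≤ i ≠ j ≤ k; and (iii) E_{ϑ_i} τ_{ψ*} = sup_{θ∈(θ_1,θ_k)} E_θ τ_{ψ*} for every i = 1,…,k−1. Then every sequential test ⟨ψ,φ⟩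 with α_{ij}(ψ,φ) ≤ α_{ij} for all 1 ≤ i ≠ j ≤ k satisfies sup_{θ∈(θ_1,θ_k)} E_θ τ_{ψ*} ≤ sup_{θ∈(θ_1,θ_k)} E_θ τ_ψ. -/
open scoped BigOperators ENNReal

/-- number of successes in the sample `x` -/
def count {n : ℕ} (x : Fin n → Bool) : ℕ := (Finset.univ.filter fun i => x i).card

/-- joint Bernoulli density `f_θ^n(x) = θ^{s_n(x)} (1-θ)^{n-s_n(x)}` -/
noncomputable def fpow (θ : ℝ) (n : ℕ) (x : Fin n → Bool) : ℝ :=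
  θ ^ count x * (1 - θ) ^ (n - count x)

/-- restriction of `x ∈ {0,1}^n` to its first `m` coordinates -/
def restrict {n : ℕ} (x : Fin n → Bool) (m : ℕ) : Fin m → Bool :=
  fun i => if h : i.val < n then x ⟨i.val, h⟩ else false

/-- `s_n^ψ(x) = [∏_{m=1}^{n−1}(1−ψ_m(x_1,…,x_m))]·ψ_n(x)` -/
noncomputable def sstop (ψ : (n : ℕ) → (Fin n → Bool) → ℝ) (n : ℕ) (x : Fin n → Bool) : ℝ :=
  (∏ m ∈ Finset.range (n - 1), (1 - ψ (m + 1) (restrict x (m + 1)))) * ψ n x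

/-- a stopping rule takes values in `[0,1]` -/
def IsStoppingRule (ψ : (n : ℕ) → (Fin n → Bool) → ℝ) : Prop :=
  ∀ n x, ψ n x ∈ Set.Icc (0 : ℝ) 1

/-- a decision rule for `k` hypotheses: components in `[0,1]` summing to `1` -/
def IsDecisionRule {k : ℕ} (φ : (n : ℕ) → (Fin n → Bool) → Fin k → ℝ) : Prop :=
  (∀ n x j, φ n x j ∈ Set.Icc (0 : ℝ) 1) ∧ ∀ n x, ∑ j, φ n x j = 1

/-- total stopping probability `Σ_{n=1}^∞ Σ_{x∈{0,1}^n} s_n^ψ(x) f_θ^n(x)` -/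
noncomputable def stopMass (θ : ℝ) (ψ : (n : ℕ) → (Fin n → Bool) → ℝ) : ℝ≥0∞ :=
  ∑' n : ℕ, ∑ x : Fin (n + 1) → Bool, ENNReal.ofReal (sstop ψ (n + 1) x * fpow θ (n + 1) x)

/-- the expected sample size (with values in `[0,∞]`):
`E_θ τ_ψ = Σ_{n=1}^∞ n Σ_{x∈{0,1}^n} s_n^ψ(x) f_θ^n(x)` if
`Σ_{n=1}^∞ Σ_{x∈{0,1}^n} s_n^ψ(x) f_θ^n(x) = 1`, and `E_θ τ_ψ = +∞` otherwise. -/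
noncomputable def Etau (θ : ℝ) (ψ : (n : ℕ) → (Fin n → Bool) → ℝ) : ℝ≥0∞ :=
  if stopMass θ ψ = 1 then
    ∑' n : ℕ, ((n : ℝ≥0∞) + 1) *
      ∑ x : Fin (n + 1) → Bool, ENNReal.ofReal (sstop ψ (n + 1) x * fpow θ (n + 1) x)
  else ⊤

/-- error probability `α_{ij}(ψ,φ) = Σ_{n=1}^∞ Σ_{x∈{0,1}^n} s_n^ψ(x) φ_n^j(x) f_{θ_i}^n(x)` -/
noncomputable def errProb {k : ℕ} (θs : Fin k → ℝ) (ψ : (n : ℕ) → (Fin n → Bool) → ℝ)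
    (φ : (n : ℕ) → (Fin n → Bool) → Fin k → ℝ) (i j : Fin k) : ℝ :=
  ∑' n : ℕ, ∑ x : Fin (n + 1) → Bool, sstop ψ (n + 1) x * φ (n + 1) x j * fpow (θs i) (n + 1) x

/-- the Lagrangian value `C_{γ,ϑ}(ψ) + Σ_{i≠j} λ_{ij} α_{ij}(ψ,φ)` where
`C_{γ,ϑ}(ψ) = Σ_{i=1}^{k−1} γ_i E_{ϑ_i} τ_ψ` (with values in `[0,∞]`). -/
noncomputable def Lagr {k : ℕ} (θs : Fin k → ℝ) (ϑ γ : Fin (k - 1) → ℝ)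
    (lam : Fin k → Fin k → ℝ) (ψ : (n : ℕ) → (Fin n → Bool) → ℝ)
    (φ : (n : ℕ) → (Fin n → Bool) → Fin k → ℝ) : ℝ≥0∞ :=
  (∑ i : Fin (k - 1), ENNReal.ofReal (γ i) * Etau (ϑ i) ψ) +
    ∑ i : Fin k, ∑ j ∈ Finset.univ.filter (· ≠ i),
      ENNReal.ofReal (lam i j * errProb θs ψ φ i j)

/-- **Proposition 4.1 (Kiefer–Weiss optimality)**: if the test `⟨ψ*,φ*⟩` (i) minimizes
the Lagrangian (with finite value), (ii) attains the error probabilities `α_{ij}`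
exactly, and (iii) has its ESS at each `ϑ_i` equal to `sup_{θ∈(θ_1,θ_k)} E_θ τ_{ψ*}`,
then it minimizes `sup_{θ∈(θ_1,θ_k)} E_θ τ_ψ` among all tests with
`α_{ij}(ψ,φ) ≤ α_{ij}`. -/
theorem stmt6 (k : ℕ) (hk : 2 ≤ k) (θs : Fin k → ℝ)
    (hθ0 : 0 ≤ θs ⟨0, by omega⟩) (hθ1 : θs ⟨k - 1, by omega⟩ ≤ 1)
    (hmono : StrictMono θs)
    (ϑ γ : Fin (k - 1) → ℝ)
    (hϑ : ∀ i : Fin (k - 1),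
      θs ⟨i.val, by have := i.isLt; omega⟩ < ϑ i ∧
        ϑ i < θs ⟨i.val + 1, by have := i.isLt; omega⟩)
    (hγ0 : ∀ i, 0 ≤ γ i) (hγ1 : ∑ i, γ i = 1)
    (lam : Fin k → Fin k → ℝ) (hlam : ∀ i j, 0 ≤ lam i j)
    (αb : Fin k → Fin k → ℝ) (hαb : ∀ i j, i ≠ j → 0 < αb i j)
    (ψs : (n : ℕ) → (Fin n → Bool) → ℝ) (φs : (n : ℕ) → (Fin n → Bool) → Fin k → ℝ)
    (hψs : IsStoppingRule ψs) (hφs : IsDecisionRule φs)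
    -- (i) the Lagrangian value of ⟨ψ*,φ*⟩ is finite and minimal:
    (hfin : Lagr θs ϑ γ lam ψs φs ≠ ⊤)
    (hmin : ∀ ψ φ, IsStoppingRule ψ → IsDecisionRule φ →
      Lagr θs ϑ γ lam ψs φs ≤ Lagr θs ϑ γ lam ψ φ)
    -- (ii) the error probabilities are attained exactly:
    (hattain : ∀ i j, i ≠ j → errProb θs ψs φs i j = αb i j)
    -- (iii) the ESS at each ϑ_i equals the supremum over (θ_1, θ_k):
    (hsup : ∀ i : Fin (k - 1),
      Etau (ϑ i) ψs = ⨆ θ ∈ Set.Ioo (θs ⟨0, by omega⟩) (θs ⟨k - 1, by omega⟩), Etau θ ψs)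
    -- an arbitrary competing test satisfying the error-probability restrictions:
    (ψ : (n : ℕ) → (Fin n → Bool) → ℝ) (φ : (n : ℕ) → (Fin n → Bool) → Fin k → ℝ)
    (hψ : IsStoppingRule ψ) (hφ : IsDecisionRule φ)
    (hcon : ∀ i j, i ≠ j → errProb θs ψ φ i j ≤ αb i j) :
    (⨆ θ ∈ Set.Ioo (θs ⟨0, by omega⟩) (θs ⟨k - 1, by omega⟩), Etau θ ψs) ≤
      ⨆ θ ∈ Set.Ioo (θs ⟨0, by omega⟩) (θs ⟨k - 1, by omega⟩), Etau θ ψ := by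

  -- abbreviations
  set a := θs ⟨0, by omega⟩ with ha
  set b := θs ⟨k - 1, by omega⟩ with hb
  set S := ⨆ θ ∈ Set.Ioo a b, Etau θ ψs with hS
  -- each ϑ i lies in (a, b)
  have hmem : ∀ i : Fin (k - 1), ϑ i ∈ Set.Ioo a b := by
    intro i
    have hi := i.isLt
    constructor
    · exact lt_of_le_of_lt (hmono.monotone (by simp [Fin.mk_le_mk])) (hϑ i).1
    · exact lt_of_lt_of_le (hϑ i).2 (hmono.monotone (by rw [Fin.mk_le_mk]; omega))
  -- the fixed error-cost term
  set Eb : ℝ≥0∞ := ∑ i : Fin k, ∑ j ∈ Finset.univ.filter (· ≠ i),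
      ENNReal.ofReal (lam i j * αb i j) with hEb
  have hEbne : Eb ≠ ⊤ := by
    refine (lt_of_le_of_lt (Finset.sum_le_sum fun i _ => le_refl _) ?_).ne
    exact ENNReal.sum_lt_top.mpr fun i _ => ENNReal.sum_lt_top.mpr fun j _ => ENNReal.ofReal_lt_top
  have hLs : Lagr θs ϑ γ lam ψs φs
      = (∑ i : Fin (k - 1), ENNReal.ofReal (γ i) * Etau (ϑ i) ψs) + Eb := by
    unfold Lagr
    congr 1
    refine Finset.sum_congr rfl fun i _ => Finset.sum_congr rfl fun j hj => ?_
    rw [hattain i j (Finset.mem_filter.mp hj).2.symm]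
  -- error term of the competing test is ≤ Eb
  have hEle : (∑ i : Fin k, ∑ j ∈ Finset.univ.filter (· ≠ i),
      ENNReal.ofReal (lam i j * errProb θs ψ φ i j)) ≤ Eb := by
    refine Finset.sum_le_sum fun i _ => Finset.sum_le_sum fun j hj => ?_
    exact ENNReal.ofReal_le_ofReal
      (mul_le_mul_of_nonneg_left (hcon i j (Finset.mem_filter.mp hj).2.symm) (hlam i j))
  -- minimality gives C(ψs) ≤ C(ψ)
  have hC : (∑ i : Fin (k - 1), ENNReal.ofReal (γ i) * Etau (ϑ i) ψs)
      ≤ ∑ i : Fin (k - 1), ENNReal.ofReal (γ i) * Etau (ϑ i) ψ := by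
    have h1 := hmin ψ φ hψ hφ
    rw [hLs] at h1
    have h2 : (∑ i : Fin (k - 1), ENNReal.ofReal (γ i) * Etau (ϑ i) ψs) + Eb
        ≤ (∑ i : Fin (k - 1), ENNReal.ofReal (γ i) * Etau (ϑ i) ψ) + Eb :=
      h1.trans (by unfold Lagr; exact add_le_add_right hEle _)
    exact (ENNReal.add_le_add_iff_right hEbne).mp h2
  -- sum of ofReal γ is 1
  have hγsum : (∑ i : Fin (k - 1), ENNReal.ofReal (γ i)) = 1 := by
    rw [← ENNReal.ofReal_sum_of_nonneg (fun i _ => hγ0 i), hγ1, ENNReal.ofReal_one]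
  -- LHS sum equals S
  have hLHS : (∑ i : Fin (k - 1), ENNReal.ofReal (γ i) * Etau (ϑ i) ψs) = S := by
    calc (∑ i : Fin (k - 1), ENNReal.ofReal (γ i) * Etau (ϑ i) ψs)
        = ∑ i : Fin (k - 1), ENNReal.ofReal (γ i) * S := by
          refine Finset.sum_congr rfl fun i _ => by rw [hsup i]
      _ = (∑ i : Fin (k - 1), ENNReal.ofReal (γ i)) * S := by rw [Finset.sum_mul]
      _ = S := by rw [hγsum, one_mul]
  -- RHS sum ≤ sup over ψ
  have hRHS : (∑ i : Fin (k - 1), ENNReal.ofReal (γ i) * Etau (ϑ i) ψ)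
      ≤ ⨆ θ ∈ Set.Ioo a b, Etau θ ψ := by
    calc (∑ i : Fin (k - 1), ENNReal.ofReal (γ i) * Etau (ϑ i) ψ)
        ≤ ∑ i : Fin (k - 1), ENNReal.ofReal (γ i) * ⨆ θ ∈ Set.Ioo a b, Etau θ ψ := by
          exact Finset.sum_le_sum fun i _ =>
            mul_le_mul_right (le_iSup₂ (f := fun θ _ => Etau θ ψ) (ϑ i) (hmem i)) _
      _ = (∑ i : Fin (k - 1), ENNReal.ofReal (γ i)) * ⨆ θ ∈ Set.Ioo a b, Etau θ ψ := by
          rw [Finset.sum_mul]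
      _ = _ := by rw [hγsum, one_mul]
  exact hLHS ▸ (hC.trans hRHS)
end

section
/- (Optimality of the decision rule, Bernoulli instance of equation (2-1).) Let ψ be any stopping rule. For every decision rule φ, Σ_{1≤i≠j≤k} λ_{ij} α_{ij}(ψ,φ) ≥ Σ_{n=1}^∞ Σ_{x∈{0,1}^n} s_n^ψ(x) v_n(x) (sums with values in [0,∞]). Moreover, if φ satisfies φ_n^j(x) = 0 whenever Σ_{i≠j} λ_{ij} f_{θ_i}^n(x) > v_n(x) (for all n, x, j), then equality holds. -/
open scoped BigOperators ENNReal

/-- `v_n(x) = min_{1≤j≤k} Σ_{i≠j} λ_{ij} f_{θ_i}^n(x)` -/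
noncomputable def vfun (k : ℕ) (θs : Fin k → ℝ) (lam : Fin k → Fin k → ℝ)
    (n : ℕ) (x : Fin n → Bool) : ℝ :=
  ⨅ j : Fin k, ∑ i ∈ Finset.univ.filter (· ≠ j), lam i j * fpow (θs i) n x

lemma fpow_nonneg {θ : ℝ} (hθ : θ ∈ Set.Icc (0:ℝ) 1) (n : ℕ) (x : Fin n → Bool) :
    0 ≤ fpow θ n x :=
  mul_nonneg (pow_nonneg hθ.1 _) (pow_nonneg (by linarith [hθ.2]) _)

lemma sstop_nonneg (ψ : (n : ℕ) → (Fin n → Bool) → ℝ)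
    (hψ : ∀ n x, ψ n x ∈ Set.Icc (0:ℝ) 1) (n : ℕ) (x : Fin n → Bool) :
    0 ≤ sstop ψ n x := by
  apply mul_nonneg
  · exact Finset.prod_nonneg fun m _ => by linarith [(hψ (m+1) (restrict x (m+1))).2]
  · exact (hψ n x).1

lemma swap_ne_sum {k : ℕ} (g : Fin k → Fin k → ℝ) :
    ∑ i : Fin k, ∑ j ∈ Finset.univ.filter (· ≠ i), g i j
      = ∑ j : Fin k, ∑ i ∈ Finset.univ.filter (· ≠ j), g i j := by
  simp only [Finset.sum_filter]
  rw [Finset.sum_comm]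
  refine Finset.sum_congr rfl fun j _ => Finset.sum_congr rfl fun i _ => ?_
  by_cases h : i = j
  · simp [h]
  · simp [h, Ne.symm h]

/-- **Optimality of the decision rule (Bernoulli instance of equation (2-1))**:
for any stopping rule `ψ` and any decision rule `φ`,
`Σ_{1≤i≠j≤k} λ_{ij} α_{ij}(ψ,φ) ≥ Σ_{n=1}^∞ Σ_{x∈{0,1}^n} s_n^ψ(x) v_n(x)`
(sums with values in `[0,∞]`), with equality whenever `φ_n^j(x) = 0` at every point
where `Σ_{i≠j} λ_{ij} f_{θ_i}^n(x) > v_n(x)`. -/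
theorem stmt13 (k : ℕ) (hk : 2 ≤ k) (θs : Fin k → ℝ)
    (hθ : ∀ i, θs i ∈ Set.Icc (0 : ℝ) 1)
    (lam : Fin k → Fin k → ℝ) (hlam : ∀ i j, 0 ≤ lam i j)
    (ψ : (n : ℕ) → (Fin n → Bool) → ℝ) (hψ : ∀ n x, ψ n x ∈ Set.Icc (0 : ℝ) 1)
    (φ : (n : ℕ) → (Fin n → Bool) → Fin k → ℝ)
    (hφ : ∀ n x j, φ n x j ∈ Set.Icc (0 : ℝ) 1)
    (hφsum : ∀ n x, ∑ j, φ n x j = 1) :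
    (∑' n : ℕ, ∑ x : Fin (n + 1) → Bool,
        ENNReal.ofReal (sstop ψ (n + 1) x * vfun k θs lam (n + 1) x)) ≤
      (∑ i : Fin k, ∑ j ∈ Finset.univ.filter (· ≠ i),
        ENNReal.ofReal (lam i j) *
          ∑' n : ℕ, ∑ x : Fin (n + 1) → Bool,
            ENNReal.ofReal (sstop ψ (n + 1) x * φ (n + 1) x j * fpow (θs i) (n + 1) x)) ∧
    ((∀ n : ℕ, ∀ x : Fin n → Bool, ∀ j : Fin k,
        vfun k θs lam n x < ∑ i ∈ Finset.univ.filter (· ≠ j), lam i j * fpow (θs i) n x →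
          φ n x j = 0) →
      (∑ i : Fin k, ∑ j ∈ Finset.univ.filter (· ≠ i),
        ENNReal.ofReal (lam i j) *
          ∑' n : ℕ, ∑ x : Fin (n + 1) → Bool,
            ENNReal.ofReal (sstop ψ (n + 1) x * φ (n + 1) x j * fpow (θs i) (n + 1) x)) =
        ∑' n : ℕ, ∑ x : Fin (n + 1) → Bool,
          ENNReal.ofReal (sstop ψ (n + 1) x * vfun k θs lam (n + 1) x)) := by
  haveI : Nonempty (Fin k) := ⟨⟨0, by omega⟩⟩
  set B : (n : ℕ) → (Fin n → Bool) → Fin k → ℝ := fun n x j =>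
    ∑ i ∈ Finset.univ.filter (· ≠ j), lam i j * fpow (θs i) n x with hB
  have hBnn : ∀ n x j, 0 ≤ B n x j := fun n x j =>
    Finset.sum_nonneg fun i _ => mul_nonneg (hlam i j) (fpow_nonneg (hθ i) n x)
  have hvle : ∀ n x j, vfun k θs lam n x ≤ B n x j := fun n x j =>
    ciInf_le (Set.finite_range _).bddBelow j
  have hvnn : ∀ n (x : Fin n → Bool), 0 ≤ vfun k θs lam n x := fun n x =>
    Real.iInf_nonneg fun j => hBnn n x j
  have hSnn : ∀ n (x : Fin n → Bool), 0 ≤ sstop ψ n x := sstop_nonneg ψ hψ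
  -- key identity
  have key : (∑ i : Fin k, ∑ j ∈ Finset.univ.filter (· ≠ i),
        ENNReal.ofReal (lam i j) *
          ∑' n : ℕ, ∑ x : Fin (n + 1) → Bool,
            ENNReal.ofReal (sstop ψ (n + 1) x * φ (n + 1) x j * fpow (θs i) (n + 1) x))
      = ∑' n : ℕ, ∑ x : Fin (n + 1) → Bool,
          ENNReal.ofReal (sstop ψ (n + 1) x *
            ∑ j : Fin k, φ (n+1) x j * B (n+1) x j) := by
    have h1 : ∀ i j, ENNReal.ofReal (lam i j) *
          ∑' n : ℕ, ∑ x : Fin (n + 1) → Bool,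
            ENNReal.ofReal (sstop ψ (n + 1) x * φ (n + 1) x j * fpow (θs i) (n + 1) x)
        = ∑' n : ℕ, ∑ x : Fin (n + 1) → Bool,
            ENNReal.ofReal
              (lam i j * (sstop ψ (n + 1) x * φ (n + 1) x j * fpow (θs i) (n + 1) x)) := by
      intro i j
      rw [← ENNReal.tsum_mul_left]
      refine tsum_congr fun n => ?_
      rw [Finset.mul_sum]
      exact Finset.sum_congr rfl fun x _ => (ENNReal.ofReal_mul (hlam i j)).symm
    simp only [h1]
    have h2 : ∀ (g : Fin k → Fin k → ℕ → ℝ≥0∞),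
        (∑ i : Fin k, ∑ j ∈ Finset.univ.filter (· ≠ i), ∑' n : ℕ, g i j n)
          = ∑' n : ℕ, ∑ i : Fin k, ∑ j ∈ Finset.univ.filter (· ≠ i), g i j n := by
      intro g
      calc (∑ i : Fin k, ∑ j ∈ Finset.univ.filter (· ≠ i), ∑' n : ℕ, g i j n)
          = ∑ i : Fin k, ∑' n : ℕ, ∑ j ∈ Finset.univ.filter (· ≠ i), g i j n :=
            Finset.sum_congr rfl fun i _ =>
              (Summable.tsum_finsetSum (fun _ _ => ENNReal.summable)).symm
        _ = ∑' n : ℕ, ∑ i : Fin k, ∑ j ∈ Finset.univ.filter (· ≠ i), g i j n :=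
            (Summable.tsum_finsetSum (fun _ _ => ENNReal.summable)).symm
    rw [h2]
    refine tsum_congr fun n => ?_
    have h3 : (∑ i : Fin k, ∑ j ∈ Finset.univ.filter (· ≠ i),
          ∑ x : Fin (n + 1) → Bool, ENNReal.ofReal
            (lam i j * (sstop ψ (n + 1) x * φ (n + 1) x j * fpow (θs i) (n + 1) x)))
        = ∑ x : Fin (n + 1) → Bool, ∑ i : Fin k, ∑ j ∈ Finset.univ.filter (· ≠ i),
            ENNReal.ofReal
              (lam i j * (sstop ψ (n + 1) x * φ (n + 1) x j * fpow (θs i) (n + 1) x)) := by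
      rw [Finset.sum_comm]
      exact Finset.sum_congr rfl fun x _ => Finset.sum_comm
    rw [h3]
    refine Finset.sum_congr rfl fun x _ => ?_
    have h4 : ∀ i j, 0 ≤ lam i j * (sstop ψ (n + 1) x * φ (n + 1) x j * fpow (θs i) (n + 1) x) :=
      fun i j => mul_nonneg (hlam i j)
        (mul_nonneg (mul_nonneg (hSnn _ x) (hφ _ x j).1) (fpow_nonneg (hθ i) _ x))
    rw [show (∑ i : Fin k, ∑ j ∈ Finset.univ.filter (· ≠ i),
        ENNReal.ofReal
          (lam i j * (sstop ψ (n + 1) x * φ (n + 1) x j * fpow (θs i) (n + 1) x)))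
      = ENNReal.ofReal (∑ i : Fin k, ∑ j ∈ Finset.univ.filter (· ≠ i),
          lam i j * (sstop ψ (n + 1) x * φ (n + 1) x j * fpow (θs i) (n + 1) x)) by
        rw [ENNReal.ofReal_sum_of_nonneg
          (fun i _ => Finset.sum_nonneg fun j _ => h4 i j)]
        exact Finset.sum_congr rfl fun i _ =>
          (ENNReal.ofReal_sum_of_nonneg (fun j _ => h4 i j)).symm]
    congr 1
    rw [swap_ne_sum]
    simp only [hB, Finset.mul_sum]
    refine Finset.sum_congr rfl fun j _ => ?_
    refine Finset.sum_congr rfl fun i _ => ?_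
    ring
  constructor
  · rw [key]
    refine ENNReal.tsum_le_tsum fun n => Finset.sum_le_sum fun x _ => ?_
    refine ENNReal.ofReal_le_ofReal (mul_le_mul_of_nonneg_left ?_ (hSnn _ x))
    calc vfun k θs lam (n+1) x = (∑ j : Fin k, φ (n+1) x j) * vfun k θs lam (n+1) x := by
          rw [hφsum, one_mul]
      _ = ∑ j : Fin k, φ (n+1) x j * vfun k θs lam (n+1) x := by rw [Finset.sum_mul]
      _ ≤ ∑ j : Fin k, φ (n+1) x j * B (n+1) x j :=
          Finset.sum_le_sum fun j _ =>
            mul_le_mul_of_nonneg_left (hvle _ x j) (hφ _ x j).1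
  · intro hzero
    rw [key]
    refine tsum_congr fun n => Finset.sum_congr rfl fun x _ => ?_
    congr 1
    have : (∑ j : Fin k, φ (n+1) x j * B (n+1) x j)
        = ∑ j : Fin k, φ (n+1) x j * vfun k θs lam (n+1) x := by
      refine Finset.sum_congr rfl fun j _ => ?_
      rcases lt_or_ge (vfun k θs lam (n+1) x) (B (n+1) x j) with h | h
      · rw [hzero (n+1) x j h]; ring
      · rw [le_antisymm h (hvle _ x j)]
    rw [this, ← Finset.sum_mul, hφsum, one_mul]
end
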